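/- Let φ : Λ → Γ be a homomorphism of (not necessarily commutative, unital) rings. Then φ is an epimorphism in the category of rings — i.e., for every ring Δ and every pair of ring homomorphisms ψ₁, ψ₂ : Γ → Δ with ψ₁ ∘ φ = ψ₂ ∘ φ one has ψ₁ = ψ₂ — if and only if the restriction-of-scalars functor from left Γ-modules to left Λ-modules along φ is full, i.e., for all left Γ-modules X and Y, every Λ-linear map from X to Y (with Λ acting through φ) is already Γ-linear. -/

import Mathlib

universe u

/-- A ring homomorphism `φ : Λ → Γ` is an epimorphism in the category of rings if and only
if the restriction-of-scalars functor along `φ`, from left `Γ`-modules to left `Λ`-modules,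
is full: every additive map between `Γ`-modules that is `Λ`-linear (for the `Λ`-actions
through `φ`) is already `Γ`-linear. -/
theorem stmt_0 {Λ Γ : Type u} [Ring Λ] [Ring Γ] (φ : Λ →+* Γ) :
    (∀ (Δ : Type u) [Ring Δ] (ψ₁ ψ₂ : Γ →+* Δ), ψ₁.comp φ = ψ₂.comp φ → ψ₁ = ψ₂) ↔
      (∀ (X Y : Type u) [AddCommGroup X] [AddCommGroup Y] [Module Γ X] [Module Γ Y]
        (f : X →+ Y), (∀ (l : Λ) (x : X), f (φ l • x) = φ l • f x) →
        ∀ (g : Γ) (x : X), f (g • x) = g • f x) := by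
  constructor
  · intro hepi X Y _ _ _ _ f hf g x
    -- conjugation by the shear (x, y) ↦ (x, y + f x)
    let c : (X × Y) ≃+ (X × Y) :=
      { toFun := fun p => (p.1, p.2 + f p.1)
        invFun := fun p => (p.1, p.2 - f p.1)
        left_inv := by intro p; simp
        right_inv := by intro p; simp
        map_add' := by
          intro p q
          refine Prod.ext rfl ?_
          simp only [Prod.fst_add, Prod.snd_add, map_add]
          abel }
    have hcs : ∀ p : X × Y, c.symm p = (p.1, p.2 - f p.1) := fun _ => rfl
    have hc : ∀ p : X × Y, c p = (p.1, p.2 + f p.1) := fun _ => rfl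
    let conj : AddMonoid.End (X × Y) →+* AddMonoid.End (X × Y) :=
      { toFun := fun h => (c.toAddMonoidHom.comp h).comp c.symm.toAddMonoidHom
        map_one' := by
          refine AddMonoidHom.ext fun p => ?_
          show c (c.symm p) = p
          exact c.apply_symm_apply p
        map_mul' := by
          intro a b
          refine AddMonoidHom.ext fun p => ?_
          show c (a (b (c.symm p))) = c (a (c.symm (c (b (c.symm p)))))
          rw [c.symm_apply_apply]
        map_zero' := by
          refine AddMonoidHom.ext fun p => ?_
          show c 0 = 0
          exact map_zero c
        map_add' := by
          intro a b
          refine AddMonoidHom.ext fun p => ?_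
          show c ((a + b) (c.symm p)) = c (a (c.symm p)) + c (b (c.symm p))
          show c (a (c.symm p) + b (c.symm p)) = _
          rw [map_add] }
    let ψ₁ : Γ →+* AddMonoid.End (X × Y) := Module.toAddMonoidEnd Γ (X × Y)
    have hend : ∀ (g : Γ) (p : X × Y), ψ₁ g p = g • p := fun _ _ => rfl
    have key : ψ₁ = conj.comp ψ₁ := by
      apply hepi
      refine RingHom.ext fun l => AddMonoidHom.ext fun p => ?_
      show ψ₁ (φ l) p = c (ψ₁ (φ l) (c.symm p))
      rw [hend, hend, hcs, hc]
      refine Prod.ext rfl ?_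
      simp only [Prod.smul_fst, Prod.smul_snd, Prod.smul_mk, smul_sub, hf]
      abel
    have h2 := congrArg (fun (h : Γ →+* AddMonoid.End (X × Y)) => ((h g) (x, (0 : Y))).2) key
    simp only [RingHom.coe_comp, Function.comp_apply] at h2
    have h3 : (ψ₁ g (x, (0 : Y))).2 = (c (ψ₁ g (c.symm (x, (0 : Y))))).2 := h2
    rw [hend, hend, hcs, hc] at h3
    simp only [Prod.smul_mk, smul_zero, map_zero, smul_sub, zero_sub, smul_neg] at h3
    exact (neg_add_eq_zero.mp h3.symm).symm
  · intro hfull Δ _ ψ₁ ψ₂ h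
    letI m₁ : Module Γ Δ := Module.compHom Δ ψ₁
    letI m₂ : Module Γ Δ := Module.compHom Δ ψ₂
    have key := @hfull Δ Δ _ _ m₁ m₂ (AddMonoidHom.id Δ) ?_
    · refine RingHom.ext fun g => ?_
      have h1 : ψ₁ g * 1 = ψ₂ g * 1 := key g 1
      simpa using h1
    · intro l x
      show ψ₁ (φ l) * x = ψ₂ (φ l) * x
      rw [show ψ₁ (φ l) = ψ₂ (φ l) from RingHom.congr_fun h l]
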